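/- Let α, β > -1 and let r be a positive integer. There exist constants c₁, c₂ > 0, depending only on α, β and r, such that for all integers n ≥ 1, 0 ≤ k ≤ n and 0 ≤ j ≤ r: c₁ · (n/(k+1))^{j} ≤ A_{r,j,k,n}^{α,β} ≤ c₂ · (n/(k+1))^{j}. -/

import Mathlib

open Finset
set_option maxHeartbeats 1000000
noncomputable section
/-- The Pochhammer symbol `(a)_n = a (a+1) ⋯ (a+n-1)` for real `a`. -/
def poch (a : ℝ) (n : ℕ) : ℝ := Polynomial.eval a (ascPochhammer ℝ n)

/-- The coefficient `A_{r,j,k,n}^{α,β}`, set to `0` when `j < 0` or `j > r`. -/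
def Acoef (α β : ℝ) (r : ℕ) (j : ℤ) (k n : ℕ) : ℝ :=
  if 0 ≤ j ∧ j ≤ (r : ℤ) then
    (r.choose j.toNat : ℝ) * poch ((k : ℝ) + β + 1) j.toNat *
        poch ((n : ℝ) + k + α + β + 2) j.toNat /
      (poch (2 * k + α + β + j + 1) j.toNat * poch (2 * k + α + β + r + 2) j.toNat)
  else 0

/-- The matrix `M_r(k,n)`. -/
def Mrkn (α β : ℝ) (r k n : ℕ) : Matrix (Fin (2 * r)) (Fin (2 * r)) ℝ :=
  fun i j =>
    if (i : ℕ) < r then Acoef α β r ((j : ℤ) - (i : ℤ)) (k + i) n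
    else (-1 : ℝ) ^ ((j : ℤ) - (i : ℤ) + r) * Acoef β α r ((j : ℤ) - (i : ℤ) + r) (k + i - r) n

lemma poch_eq_prod (a : ℝ) (j : ℕ) : poch a j = ∏ i ∈ range j, (a + i) := by
  induction j with
  | zero => simp [poch]
  | succ m ih =>
    rw [poch, ascPochhammer_succ_right, prod_range_succ, ← ih, poch]
    simp [mul_comm]

lemma poch_bounds {a L U : ℝ} {j : ℕ} (hL : 0 < L)
    (h : ∀ i : ℕ, i < j → L ≤ a + i ∧ a + i ≤ U) :
    L ^ j ≤ poch a j ∧ poch a j ≤ U ^ j := by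
  rw [poch_eq_prod]
  constructor
  · calc L ^ j = ∏ _i ∈ range j, L := by rw [prod_const, card_range]
      _ ≤ ∏ i ∈ range j, (a + i) :=
        Finset.prod_le_prod (fun i _ => hL.le) (fun i hi => (h i (mem_range.1 hi)).1)
  · calc (∏ i ∈ range j, (a + (i:ℝ))) ≤ ∏ _i ∈ range j, U :=
        Finset.prod_le_prod (fun i hi => hL.le.trans (h i (mem_range.1 hi)).1)
          (fun i hi => (h i (mem_range.1 hi)).2)
      _ = U ^ j := by rw [prod_const, card_range]


section factorlemmas
variable {α β m k i N J R : ℝ}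

lemma facL1 (h1 : m ≤ 1) (h2 : m ≤ β + 1) (hk : 0 ≤ k) (hi : 0 ≤ i) :
    m * (k + 1) ≤ k + β + 1 + i := by nlinarith [mul_nonneg (sub_nonneg.2 h1) hk]

lemma facU1 (hβ : -1 < β) (hk : 0 ≤ k) (hi : i + 1 ≤ R) (hR : 1 ≤ R) :
    k + β + 1 + i ≤ (β + R + 1) * (k + 1) := by
  nlinarith [mul_nonneg (by linarith : (0:ℝ) ≤ β + R) hk]

lemma facL2 (hα : -1 < α) (hβ : -1 < β) (hk : 0 ≤ k) (hi : 0 ≤ i) :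
    1 * N ≤ N + k + α + β + 2 + i := by nlinarith

lemma facU2 (hα : -1 < α) (hβ : -1 < β) (hk : k ≤ N) (hN : 1 ≤ N) (hi : i + 1 ≤ R)
    (hR : 1 ≤ R) : N + k + α + β + 2 + i ≤ (α + β + R + 4) * N := by
  nlinarith [mul_nonneg (by linarith : (0:ℝ) ≤ α + β + R + 2) (by linarith : (0:ℝ) ≤ N - 1)]

lemma facL3 (h1 : m ≤ 2) (h2 : m ≤ α + β + 2) (hk : 0 ≤ k) (hi : 0 ≤ i) (hij : i + 1 ≤ J) :
    m * (k + 1) ≤ 2 * k + α + β + J + 1 + i := by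
  nlinarith [mul_nonneg (sub_nonneg.2 h1) hk]

lemma facU3 (hα : -1 < α) (hβ : -1 < β) (hk : 0 ≤ k) (hi : i + 1 ≤ R) (hJ : J ≤ R)
    (hR : 1 ≤ R) : 2 * k + α + β + J + 1 + i ≤ (α + β + 2 * R + 2) * (k + 1) := by
  nlinarith [mul_nonneg (by linarith : (0:ℝ) ≤ α + β + 2 * R) hk]

lemma facL4 (h1 : m ≤ 2) (h2 : m ≤ α + β + R + 2) (hk : 0 ≤ k) (hi : 0 ≤ i) :
    m * (k + 1) ≤ 2 * k + α + β + R + 2 + i := by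
  nlinarith [mul_nonneg (sub_nonneg.2 h1) hk]

lemma facU4 (hα : -1 < α) (hβ : -1 < β) (hk : 0 ≤ k) (hi : i + 1 ≤ R) (hR : 1 ≤ R) :
    2 * k + α + β + R + 2 + i ≤ (α + β + 2 * R + 4) * (k + 1) := by
  nlinarith [mul_nonneg (by linarith : (0:ℝ) ≤ α + β + 2 * R + 2) hk]

end factorlemmas

theorem Acoef_bounds (α β : ℝ) (hα : -1 < α) (hβ : -1 < β) (r : ℕ) (hr : 0 < r) :
    ∃ c₁ c₂ : ℝ, 0 < c₁ ∧ 0 < c₂ ∧ ∀ n : ℕ, 1 ≤ n → ∀ k : ℕ, k ≤ n → ∀ j : ℕ, j ≤ r →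
      c₁ * ((n : ℝ) / (k + 1)) ^ j ≤ Acoef α β r j k n ∧
        Acoef α β r j k n ≤ c₂ * ((n : ℝ) / (k + 1)) ^ j := by
  have hr1 : (1 : ℝ) ≤ r := by exact_mod_cast hr
  set m1 : ℝ := min 1 (β + 1) with hm1
  set M1 : ℝ := β + r + 1 with hM1
  set M2 : ℝ := α + β + r + 4 with hM2
  set m3 : ℝ := min 2 (α + β + 2) with hm3
  set M3 : ℝ := α + β + 2 * r + 2 with hM3
  set m4 : ℝ := min 2 (α + β + r + 2) with hm4
  set M4 : ℝ := α + β + 2 * r + 4 with hM4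
  have hm1p : 0 < m1 := lt_min one_pos (by linarith)
  have hM1p : 0 < M1 := by simp only [hM1]; linarith
  have hM2p : 0 < M2 := by simp only [hM2]; linarith
  have hm3p : 0 < m3 := lt_min two_pos (by linarith)
  have hM3p : 0 < M3 := by simp only [hM3]; linarith
  have hm4p : 0 < m4 := lt_min two_pos (by linarith)
  have hM4p : 0 < M4 := by simp only [hM4]; linarith
  set q₁ : ℝ := m1 / (M3 * M4) with hq₁
  set q₂ : ℝ := M1 * M2 / (m3 * m4) with hq₂
  clear_value m1 M1 M2 m3 M3 m4 M4 q₁ q₂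
  have hq₁p : 0 < q₁ := by rw [hq₁]; exact div_pos hm1p (mul_pos hM3p hM4p)
  have hq₂p : 0 < q₂ := by rw [hq₂]; exact div_pos (mul_pos hM1p hM2p) (mul_pos hm3p hm4p)
  refine ⟨(min 1 q₁) ^ r, 2 ^ r * (max 1 q₂) ^ r,
    pow_pos (lt_min one_pos hq₁p) r,
    mul_pos (pow_pos two_pos r) (pow_pos (lt_of_lt_of_le one_pos (le_max_left _ _)) r),
    ?_⟩
  intro n hn k hk j hj
  have hN : (0:ℝ) < n := by exact_mod_cast hn
  have hN1 : (1:ℝ) ≤ n := by exact_mod_cast hn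
  have hK : (0:ℝ) < (k:ℝ) + 1 := by positivity
  have hkn : (k:ℝ) ≤ n := by exact_mod_cast hk
  have hjr : (j:ℝ) ≤ r := by exact_mod_cast hj
  have hk0 : (0:ℝ) ≤ k := Nat.cast_nonneg k
  -- unfold Acoef
  have hA : Acoef α β r j k n =
      (r.choose j : ℝ) * poch ((k : ℝ) + β + 1) j * poch ((n : ℝ) + k + α + β + 2) j /
        (poch (2 * k + α + β + j + 1) j * poch (2 * k + α + β + r + 2) j) := by
    rw [Acoef, if_pos ⟨Int.natCast_nonneg j, by exact_mod_cast hj⟩]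
    simp
  -- per-factor bounds
  have hm1a : m1 ≤ 1 := by rw [hm1]; exact min_le_left _ _
  have hm1b : m1 ≤ β + 1 := by rw [hm1]; exact min_le_right _ _
  have hm3a : m3 ≤ 2 := by rw [hm3]; exact min_le_left _ _
  have hm3b : m3 ≤ α + β + 2 := by rw [hm3]; exact min_le_right _ _
  have hm4a : m4 ≤ 2 := by rw [hm4]; exact min_le_left _ _
  have hm4b : m4 ≤ α + β + r + 2 := by rw [hm4]; exact min_le_right _ _
  obtain ⟨h1l, h1u⟩ := poch_bounds (a := (k : ℝ) + β + 1) (j := j)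
      (L := m1 * ((k:ℝ)+1)) (U := M1 * ((k:ℝ)+1)) (mul_pos hm1p hK) (fun i hi => by
    have hi0 : (0:ℝ) ≤ i := Nat.cast_nonneg i
    have hir : (i:ℝ) + 1 ≤ r := by
      have : i + 1 ≤ r := le_trans hi hj
      exact_mod_cast this
    exact ⟨facL1 hm1a hm1b hk0 hi0, by rw [hM1]; exact facU1 hβ hk0 hir hr1⟩)
  obtain ⟨h2l, h2u⟩ := poch_bounds (a := (n : ℝ) + k + α + β + 2) (j := j)
      (L := 1 * (n:ℝ)) (U := M2 * (n:ℝ)) (mul_pos one_pos hN) (fun i hi => by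
    have hi0 : (0:ℝ) ≤ i := Nat.cast_nonneg i
    have hir : (i:ℝ) + 1 ≤ r := by
      have : i + 1 ≤ r := le_trans hi hj
      exact_mod_cast this
    exact ⟨facL2 hα hβ hk0 hi0, by rw [hM2]; exact facU2 hα hβ hkn hN1 hir hr1⟩)
  obtain ⟨h3l, h3u⟩ := poch_bounds (a := 2 * (k : ℝ) + α + β + j + 1) (j := j)
      (L := m3 * ((k:ℝ)+1)) (U := M3 * ((k:ℝ)+1)) (mul_pos hm3p hK) (fun i hi => by
    have hi0 : (0:ℝ) ≤ i := Nat.cast_nonneg i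
    have hij : (i:ℝ) + 1 ≤ j := by exact_mod_cast hi
    have hir : (i:ℝ) + 1 ≤ r := by
      have : i + 1 ≤ r := le_trans hi hj
      exact_mod_cast this
    exact ⟨facL3 hm3a hm3b hk0 hi0 hij, by rw [hM3]; exact facU3 hα hβ hk0 hir hjr hr1⟩)
  obtain ⟨h4l, h4u⟩ := poch_bounds (a := 2 * (k : ℝ) + α + β + r + 2) (j := j)
      (L := m4 * ((k:ℝ)+1)) (U := M4 * ((k:ℝ)+1)) (mul_pos hm4p hK) (fun i hi => by
    have hi0 : (0:ℝ) ≤ i := Nat.cast_nonneg i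
    have hir : (i:ℝ) + 1 ≤ r := by
      have : i + 1 ≤ r := le_trans hi hj
      exact_mod_cast this
    exact ⟨facL4 hm4a hm4b hk0 hi0, by rw [hM4]; exact facU4 hα hβ hk0 hir hr1⟩)
  rw [one_mul] at h2l
  have hch1 : (1:ℝ) ≤ (r.choose j : ℝ) := by
    exact_mod_cast Nat.one_le_iff_ne_zero.2 (Nat.choose_pos hj).ne'
  have hch2 : ((r.choose j : ℕ) : ℝ) ≤ 2 ^ r := by
    have : r.choose j ≤ 2 ^ r := by
      calc r.choose j ≤ ∑ m ∈ range (r + 1), r.choose m :=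
            Finset.single_le_sum (fun i _ => Nat.zero_le _) (mem_range.2 (Nat.lt_succ_of_le hj))
        _ = 2 ^ r := Nat.sum_range_choose r
    exact_mod_cast this
  -- positivity facts
  have hP1 : 0 < poch ((k : ℝ) + β + 1) j := lt_of_lt_of_le (pow_pos (mul_pos hm1p hK) j) h1l
  have hP2 : 0 < poch ((n : ℝ) + k + α + β + 2) j := lt_of_lt_of_le (pow_pos hN j) h2l
  have hP3 : 0 < poch (2 * (k : ℝ) + α + β + j + 1) j :=
    lt_of_lt_of_le (pow_pos (mul_pos hm3p hK) j) h3l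
  have hP4 : 0 < poch (2 * (k : ℝ) + α + β + r + 2) j :=
    lt_of_lt_of_le (pow_pos (mul_pos hm4p hK) j) h4l
  have hden : 0 < poch (2 * (k : ℝ) + α + β + j + 1) j * poch (2 * (k : ℝ) + α + β + r + 2) j :=
    mul_pos hP3 hP4
  have hXnn : (0:ℝ) ≤ (n:ℝ) / ((k:ℝ) + 1) := div_nonneg hN.le hK.le
  constructor
  · -- lower bound
    rw [hA]
    have step1 : (m1 * ((k:ℝ)+1)) ^ j * (n:ℝ) ^ j /
        ((M3 * ((k:ℝ)+1)) ^ j * (M4 * ((k:ℝ)+1)) ^ j) ≤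
        (r.choose j : ℝ) * poch ((k : ℝ) + β + 1) j * poch ((n : ℝ) + k + α + β + 2) j /
        (poch (2 * k + α + β + j + 1) j * poch (2 * k + α + β + r + 2) j) := by
      apply div_le_div₀ (by positivity)
      · calc (m1 * ((k:ℝ)+1)) ^ j * (n:ℝ) ^ j
            ≤ poch ((k : ℝ) + β + 1) j * poch ((n : ℝ) + k + α + β + 2) j :=
              mul_le_mul h1l h2l (pow_nonneg hN.le j) hP1.le
          _ = 1 * (poch ((k : ℝ) + β + 1) j * poch ((n : ℝ) + k + α + β + 2) j) :=
              (one_mul _).symm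
          _ ≤ (r.choose j : ℝ) * (poch ((k : ℝ) + β + 1) j * poch ((n : ℝ) + k + α + β + 2) j) :=
              mul_le_mul_of_nonneg_right hch1 (mul_pos hP1 hP2).le
          _ = (r.choose j : ℝ) * poch ((k : ℝ) + β + 1) j * poch ((n : ℝ) + k + α + β + 2) j :=
              (mul_assoc _ _ _).symm
      · exact hden
      · exact mul_le_mul h3u h4u hP4.le (by positivity)
    refine le_trans ?_ step1
    have ebase : m1 * ((k:ℝ)+1) * (n:ℝ) / (M3 * ((k:ℝ)+1) * (M4 * ((k:ℝ)+1))) =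
        q₁ * ((n:ℝ) / ((k:ℝ)+1)) := by
      rw [hq₁]; field_simp
    calc (min 1 q₁) ^ r * ((n:ℝ) / ((k:ℝ)+1)) ^ j
        ≤ q₁ ^ j * ((n:ℝ) / ((k:ℝ)+1)) ^ j := by
          apply mul_le_mul_of_nonneg_right _ (pow_nonneg hXnn j)
          calc (min 1 q₁) ^ r ≤ (min 1 q₁) ^ j :=
                pow_le_pow_of_le_one (le_min zero_le_one hq₁p.le) (min_le_left _ _) hj
            _ ≤ q₁ ^ j := pow_le_pow_left₀ (le_min zero_le_one hq₁p.le) (min_le_right _ _) j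
      _ = (q₁ * ((n:ℝ) / ((k:ℝ)+1))) ^ j := (mul_pow _ _ _).symm
      _ = (m1 * ((k:ℝ)+1) * (n:ℝ) / (M3 * ((k:ℝ)+1) * (M4 * ((k:ℝ)+1)))) ^ j := by rw [ebase]
      _ = (m1 * ((k:ℝ)+1)) ^ j * (n:ℝ) ^ j / ((M3 * ((k:ℝ)+1)) ^ j * (M4 * ((k:ℝ)+1)) ^ j) := by
          simp only [div_pow, mul_pow]
  · -- upper bound
    rw [hA]
    have step1 : (r.choose j : ℝ) * poch ((k : ℝ) + β + 1) j * poch ((n : ℝ) + k + α + β + 2) j /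
        (poch (2 * k + α + β + j + 1) j * poch (2 * k + α + β + r + 2) j) ≤
        2 ^ r * ((M1 * ((k:ℝ)+1)) ^ j * (M2 * (n:ℝ)) ^ j) /
        ((m3 * ((k:ℝ)+1)) ^ j * (m4 * ((k:ℝ)+1)) ^ j) := by
      apply div_le_div₀ (by positivity) _ (by positivity)
        (mul_le_mul h3l h4l (by positivity) hP3.le)
      calc (r.choose j : ℝ) * poch ((k : ℝ) + β + 1) j * poch ((n : ℝ) + k + α + β + 2) j
          ≤ 2 ^ r * poch ((k : ℝ) + β + 1) j * poch ((n : ℝ) + k + α + β + 2) j := by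
            apply mul_le_mul_of_nonneg_right (mul_le_mul_of_nonneg_right hch2 hP1.le) hP2.le
        _ ≤ 2 ^ r * ((M1 * ((k:ℝ)+1)) ^ j * (M2 * (n:ℝ)) ^ j) := by
            rw [mul_assoc]
            exact mul_le_mul_of_nonneg_left
              (mul_le_mul h1u h2u hP2.le (by positivity)) (by positivity)
    refine le_trans step1 ?_
    have ebase : M1 * ((k:ℝ)+1) * (M2 * (n:ℝ)) / (m3 * ((k:ℝ)+1) * (m4 * ((k:ℝ)+1))) =
        q₂ * ((n:ℝ) / ((k:ℝ)+1)) := by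
      rw [hq₂]; field_simp
    calc 2 ^ r * ((M1 * ((k:ℝ)+1)) ^ j * (M2 * (n:ℝ)) ^ j) /
          ((m3 * ((k:ℝ)+1)) ^ j * (m4 * ((k:ℝ)+1)) ^ j)
        = 2 ^ r * ((M1 * ((k:ℝ)+1) * (M2 * (n:ℝ)) /
            (m3 * ((k:ℝ)+1) * (m4 * ((k:ℝ)+1)))) ^ j) := by
          simp only [div_pow, mul_pow]; ring
      _ = 2 ^ r * (q₂ * ((n:ℝ) / ((k:ℝ)+1))) ^ j := by rw [ebase]
      _ = 2 ^ r * (q₂ ^ j * ((n:ℝ) / ((k:ℝ)+1)) ^ j) := by rw [mul_pow]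
      _ ≤ 2 ^ r * ((max 1 q₂) ^ r * ((n:ℝ) / ((k:ℝ)+1)) ^ j) := by
          apply mul_le_mul_of_nonneg_left _ (by positivity)
          apply mul_le_mul_of_nonneg_right _ (pow_nonneg hXnn j)
          calc q₂ ^ j ≤ (max 1 q₂) ^ j := pow_le_pow_left₀ hq₂p.le (le_max_right _ _) j
            _ ≤ (max 1 q₂) ^ r := pow_le_pow_right₀ (le_max_left _ _) hj
      _ = 2 ^ r * (max 1 q₂) ^ r * ((n:ℝ) / ((k:ℝ)+1)) ^ j := by ring
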